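/- Let k ≥ 3 be an integer and p a prime. If there exist an (n, m) local PMF for k-cycles over F_p and an (n', m') local PMF for k-cycles over F_p, then there exists an (n + n', m·m') local PMF for k-cycles over F_p. (Concretely, concatenating every k-tuple of the first family coordinate-wise with every k-tuple of the second family yields such a local PMF.) -/

import Mathlib

/-- Let `k ≥ 3` and `p` prime. Given an `(n, m)` local PMF and an
`(n', m')` local PMF for `k`-cycles over `F_p`, there exists an `(n + n', m·m')`
local PMF for `k`-cycles over `F_p`. -/
theorem stmt_12 (k p n n' m m' : ℕ) (hk : 3 ≤ k) (hp : p.Prime)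
    (x : Fin m → Fin k → Fin n → ZMod p)
    (hxsum : ∀ i, ∑ j, x i j = 0)
    (hxpmf : ∀ idx : Fin k → Fin m, ∑ j, x (idx j) j = 0 → ∀ a b, idx a = idx b)
    (y : Fin m' → Fin k → Fin n' → ZMod p)
    (hysum : ∀ i, ∑ j, y i j = 0)
    (hypmf : ∀ idx : Fin k → Fin m', ∑ j, y (idx j) j = 0 → ∀ a b, idx a = idx b) :
    ∃ z : Fin (m * m') → Fin k → Fin (n + n') → ZMod p,
      (∀ i, ∑ j, z i j = 0) ∧
      ∀ idx : Fin k → Fin (m * m'), ∑ j, z (idx j) j = 0 → ∀ a b, idx a = idx b := by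
  set e : Fin (m * m') ≃ Fin m × Fin m' := finProdFinEquiv.symm with he
  refine ⟨fun i j => Fin.append (x (e i).1 j) (y (e i).2 j), ?_, ?_⟩
  · intro i
    funext t
    rw [Finset.sum_apply]
    refine Fin.addCases (fun t => ?_) (fun t => ?_) t
    · have : ∀ j, Fin.append (x (e i).1 j) (y (e i).2 j) (Fin.castAdd n' t)
          = x (e i).1 j t := fun j => Fin.append_left _ _ t
      simp only [this]
      have := congrFun (hxsum (e i).1) t
      rwa [Finset.sum_apply] at this
    · have : ∀ j, Fin.append (x (e i).1 j) (y (e i).2 j) (Fin.natAdd n t)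
          = y (e i).2 j t := fun j => Fin.append_right _ _ t
      simp only [this]
      have := congrFun (hysum (e i).2) t
      rwa [Finset.sum_apply] at this
  · intro idx hsum a b
    have hx0 : ∑ j, x (e (idx j)).1 j = 0 := by
      funext t
      rw [Finset.sum_apply]
      have := congrFun hsum (Fin.castAdd n' t)
      rw [Finset.sum_apply] at this
      simpa only [Fin.append_left, Pi.zero_apply] using this
    have hy0 : ∑ j, y (e (idx j)).2 j = 0 := by
      funext t
      rw [Finset.sum_apply]
      have := congrFun hsum (Fin.natAdd n t)
      rw [Finset.sum_apply] at this
      simpa only [Fin.append_right, Pi.zero_apply] using this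
    have h1 := hxpmf (fun j => (e (idx j)).1) hx0 a b
    have h2 := hypmf (fun j => (e (idx j)).2) hy0 a b
    have : e (idx a) = e (idx b) := Prod.ext h1 h2
    exact e.injective this
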